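/- arXiv:2506.00190 — 3 statements merged into one kernel-verified Lean document; each statement's English description precedes it below -/
import Mathlib

section
/- Let J ∈ ℝ^{m×n} and L ∈ ℝ^{p×n} with ker(J) ∩ ker(L) = {0}, let r ∈ ℝ^m, and for λ > 0 let d(λ) := −(JᵀJ + λ LᵀL)⁻¹ Jᵀr. Let P be the orthogonal projector of ℝ^m onto the orthogonal complement of the range of J, and let q ∈ (0,1). Then: (i) ‖r + J d(λ)‖ ≥ ‖P r‖ for every λ > 0; (ii) the function λ ↦ ‖r + J d(λ)‖ is monotonically nondecreasing on (0,∞); (iii) consequently, if ‖P r‖ > q‖r‖, then the equation ‖r + J d(λ)‖ = q‖r‖ has no solution λ > 0. -/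
open Matrix

/-- Euclidean norm of a vector in `ℝ^k`. -/
noncomputable def euclNorm {k : ℕ} (v : Fin k → ℝ) : ℝ :=
  ‖(EuclideanSpace.equiv (Fin k) ℝ).symm v‖

lemma euclNorm_eq {k : ℕ} (v : Fin k → ℝ) : euclNorm v = Real.sqrt (v ⬝ᵥ v) := by
  simp only [euclNorm, EuclideanSpace.norm_eq, dotProduct]
  congr 1
  refine Finset.sum_congr rfl fun i _ => ?_
  simp [sq, Real.norm_eq_abs, abs_mul_abs_self]

lemma dps {a : ℕ} (v : Fin a → ℝ) : 0 ≤ v ⬝ᵥ v :=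
  Finset.sum_nonneg fun i _ => mul_self_nonneg _

lemma adjoint_dot {a b : ℕ} (A : Matrix (Fin a) (Fin b) ℝ) (x : Fin b → ℝ) (y : Fin a → ℝ) :
    (A *ᵥ x) ⬝ᵥ y = x ⬝ᵥ (Aᵀ *ᵥ y) := by
  rw [dotProduct_comm, dotProduct_mulVec, ← dotProduct_comm, mulVec_transpose]

section core
variable {m n p : ℕ} (J : Matrix (Fin m) (Fin n) ℝ) (L : Matrix (Fin p) (Fin n) ℝ)

lemma posdef_A (hker : ∀ v : Fin n → ℝ, J.mulVec v = 0 → L.mulVec v = 0 → v = 0)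
    {lam : ℝ} (hlam : 0 < lam) : (Jᵀ * J + lam • (Lᵀ * L)).PosDef := by
  rw [posDef_iff_dotProduct_mulVec]
  constructor
  · unfold IsHermitian
    rw [conjTranspose_eq_transpose_of_trivial]
    simp [transpose_add, transpose_smul, transpose_mul]
  · intro x hx
    have h1 : star x ⬝ᵥ (Jᵀ * J + lam • (Lᵀ * L)) *ᵥ x
        = (J *ᵥ x) ⬝ᵥ (J *ᵥ x) + lam * ((L *ᵥ x) ⬝ᵥ (L *ᵥ x)) := by
      simp only [add_mulVec, smul_mulVec, dotProduct_add, dotProduct_smul, ← mulVec_mulVec,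
        star_trivial, smul_eq_mul]
      rw [dotProduct_mulVec x Jᵀ, vecMul_transpose, dotProduct_mulVec x Lᵀ, vecMul_transpose]
    rw [h1]
    rcases (em (J *ᵥ x = 0)) with hJ | hJ
    · have hL : L *ᵥ x ≠ 0 := fun hL => hx (hker x hJ hL)
      have : 0 < (L *ᵥ x) ⬝ᵥ (L *ᵥ x) := by
        have := dotProduct_self_eq_zero (v := L *ᵥ x)
        have h2 := dps (L *ᵥ x)
        rcases h2.lt_or_eq with h | h
        · exact h
        · exact absurd (this.mp h.symm) hL
      have h0 : (J *ᵥ x) ⬝ᵥ (J *ᵥ x) = 0 := by simp [hJ]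
      nlinarith
    · have : 0 < (J *ᵥ x) ⬝ᵥ (J *ᵥ x) := by
        have h2 := dps (J *ᵥ x)
        rcases h2.lt_or_eq with h | h
        · exact h
        · exact absurd (dotProduct_self_eq_zero.mp h.symm) hJ
      nlinarith [dps (L *ᵥ x), hlam.le]

lemma key_eq (hker : ∀ v : Fin n → ℝ, J.mulVec v = 0 → L.mulVec v = 0 → v = 0)
    (r : Fin m → ℝ) {lam : ℝ} (hlam : 0 < lam)
    (dl : Fin n → ℝ) (hdl : dl = -((Jᵀ * J + lam • (Lᵀ * L))⁻¹ *ᵥ (Jᵀ *ᵥ r))) :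
    Jᵀ *ᵥ (r + J *ᵥ dl) + lam • (Lᵀ *ᵥ (L *ᵥ dl)) = 0 := by
  have hA := posdef_A J L hker hlam
  have hu : IsUnit (Jᵀ * J + lam • (Lᵀ * L)).det := (isUnit_iff_isUnit_det _).mp hA.isUnit
  have h1 : (Jᵀ * J + lam • (Lᵀ * L)) *ᵥ dl = -(Jᵀ *ᵥ r) := by
    rw [hdl, mulVec_neg, mulVec_mulVec, mul_nonsing_inv _ hu, one_mulVec]
  have h2 : Jᵀ *ᵥ (J *ᵥ dl) + lam • (Lᵀ *ᵥ (L *ᵥ dl)) = -(Jᵀ *ᵥ r) := by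
    rw [← h1]; simp [add_mulVec, smul_mulVec, mulVec_mulVec]
  rw [mulVec_add]
  linear_combination (norm := module) h2
end core

section minim
variable {m n p : ℕ} (J : Matrix (Fin m) (Fin n) ℝ) (L : Matrix (Fin p) (Fin n) ℝ)

lemma minimizer (r : Fin m → ℝ) {lam : ℝ} (hlam : 0 < lam) (dl : Fin n → ℝ)
    (hkey : Jᵀ *ᵥ (r + J *ᵥ dl) + lam • (Lᵀ *ᵥ (L *ᵥ dl)) = 0) (e : Fin n → ℝ) :
    (r + J *ᵥ dl) ⬝ᵥ (r + J *ᵥ dl) + lam * ((L *ᵥ dl) ⬝ᵥ (L *ᵥ dl))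
      ≤ (r + J *ᵥ e) ⬝ᵥ (r + J *ᵥ e) + lam * ((L *ᵥ e) ⬝ᵥ (L *ᵥ e)) := by
  set u := e - dl with hu
  have he : e = dl + u := by simp [hu]
  have hJe : r + J *ᵥ e = (r + J *ᵥ dl) + J *ᵥ u := by
    rw [he, mulVec_add]; abel
  have hLe : L *ᵥ e = L *ᵥ dl + L *ᵥ u := by rw [he, mulVec_add]
  have hcross : (r + J *ᵥ dl) ⬝ᵥ (J *ᵥ u) + lam * ((L *ᵥ dl) ⬝ᵥ (L *ᵥ u)) = 0 := by
    have h1 := adjoint_dot Jᵀ (r + J *ᵥ dl) u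
    rw [transpose_transpose] at h1
    have h2 := adjoint_dot Lᵀ (L *ᵥ dl) u
    rw [transpose_transpose] at h2
    rw [← h1, ← h2, ← smul_eq_mul, ← smul_dotProduct, ← add_dotProduct, hkey, zero_dotProduct]
  rw [hJe, hLe]
  simp only [dotProduct_add, add_dotProduct]
  have hc1 : (J *ᵥ u) ⬝ᵥ (r + J *ᵥ dl) = (r + J *ᵥ dl) ⬝ᵥ (J *ᵥ u) := dotProduct_comm _ _
  have hc2 : (L *ᵥ u) ⬝ᵥ (L *ᵥ dl) = (L *ᵥ dl) ⬝ᵥ (L *ᵥ u) := dotProduct_comm _ _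
  have hc3 : (J *ᵥ u) ⬝ᵥ r = r ⬝ᵥ (J *ᵥ u) := dotProduct_comm _ _
  have hc4 : (J *ᵥ u) ⬝ᵥ (J *ᵥ dl) = (J *ᵥ dl) ⬝ᵥ (J *ᵥ u) := dotProduct_comm _ _
  simp only [add_dotProduct] at hcross
  nlinarith [dps (J *ᵥ u), dps (L *ᵥ u), hcross, hlam.le]
end minim

/-- Part (a) of the lemma on the `q`-condition: with `d(λ) = −(JᵀJ + λLᵀL)⁻¹Jᵀr` and `P`
the orthogonal projector onto `(range J)ᗮ`:
(i) `‖r + J d(λ)‖ ≥ ‖Pr‖` for all `λ > 0`;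
(ii) `λ ↦ ‖r + J d(λ)‖` is monotonically nondecreasing on `(0,∞)`;
(iii) hence if `‖Pr‖ > q‖r‖` then `‖r + J d(λ)‖ = q‖r‖` has no solution `λ > 0`. -/
theorem q_condition_not_solvable (m n p : ℕ)
    (J : Matrix (Fin m) (Fin n) ℝ) (L : Matrix (Fin p) (Fin n) ℝ)
    (hker : ∀ v : Fin n → ℝ, J.mulVec v = 0 → L.mulVec v = 0 → v = 0)
    (r : Fin m → ℝ) (q : ℝ) (hq0 : 0 < q) (hq1 : q < 1)
    (d : ℝ → Fin n → ℝ)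
    (hd : ∀ lam : ℝ, d lam = -((Jᵀ * J + lam • (Lᵀ * L))⁻¹.mulVec (Jᵀ.mulVec r)))
    (Pr : EuclideanSpace ℝ (Fin m))
    (hPr : Pr = (Submodule.orthogonalProjection (LinearMap.range (Matrix.toEuclideanLin J))ᗮ
        ((EuclideanSpace.equiv (Fin m) ℝ).symm r) : EuclideanSpace ℝ (Fin m))) :
    (∀ lam : ℝ, 0 < lam → euclNorm (r + J.mulVec (d lam)) ≥ ‖Pr‖) ∧
    MonotoneOn (fun lam : ℝ => euclNorm (r + J.mulVec (d lam))) (Set.Ioi (0 : ℝ)) ∧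
    (‖Pr‖ > q * euclNorm r →
      ¬ ∃ lam : ℝ, 0 < lam ∧ euclNorm (r + J.mulVec (d lam)) = q * euclNorm r) := by
  -- Part (i)
  have part1 : ∀ lam : ℝ, 0 < lam → euclNorm (r + J.mulVec (d lam)) ≥ ‖Pr‖ := by
    intro lam _
    set x : EuclideanSpace ℝ (Fin m) :=
      (EuclideanSpace.equiv (Fin m) ℝ).symm (r + J *ᵥ d lam) with hx
    have hsplit : x = (EuclideanSpace.equiv (Fin m) ℝ).symm r
        + (EuclideanSpace.equiv (Fin m) ℝ).symm (J *ᵥ d lam) := by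
      rw [hx, map_add]
    have hmem : (EuclideanSpace.equiv (Fin m) ℝ).symm (J *ᵥ d lam)
        ∈ LinearMap.range (Matrix.toEuclideanLin J) := by
      refine ⟨(EuclideanSpace.equiv (Fin n) ℝ).symm (d lam), ?_⟩
      rfl
    have hproj : (Submodule.orthogonalProjection (LinearMap.range (Matrix.toEuclideanLin J))ᗮ x : EuclideanSpace ℝ (Fin m)) = Pr := by
      rw [hsplit, map_add, Submodule.orthogonalProjectionOnto_apply_of_mem_orthogonal (Submodule.le_orthogonal_orthogonal _ hmem),
        add_zero, hPr]
    have hle : ‖(Submodule.orthogonalProjection (LinearMap.range (Matrix.toEuclideanLin J))ᗮ x : EuclideanSpace ℝ (Fin m))‖ ≤ ‖x‖ := by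
      have h1 := (Submodule.orthogonalProjection (LinearMap.range (Matrix.toEuclideanLin J))ᗮ).le_opNorm x
      have h2 := Submodule.orthogonalProjectionOnto_norm_le (LinearMap.range (Matrix.toEuclideanLin J))ᗮ
      calc ‖(Submodule.orthogonalProjection (LinearMap.range (Matrix.toEuclideanLin J))ᗮ x : EuclideanSpace ℝ (Fin m))‖
          = ‖Submodule.orthogonalProjection (LinearMap.range (Matrix.toEuclideanLin J))ᗮ x‖ := rfl
        _ ≤ ‖Submodule.orthogonalProjection (LinearMap.range (Matrix.toEuclideanLin J))ᗮ‖ * ‖x‖ := h1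
        _ ≤ 1 * ‖x‖ := by
            have := norm_nonneg x; nlinarith
        _ = ‖x‖ := one_mul _
    rw [hproj] at hle
    exact hle
  refine ⟨part1, ?_, ?_⟩
  · -- Part (ii)
    intro a ha b hb hab
    simp only [Set.mem_Ioi] at ha hb
    have hka := key_eq J L hker r ha (d a) (hd a)
    have hkb := key_eq J L hker r hb (d b) (hd b)
    have hmin1 := minimizer J L r ha (d a) hka (d b)
    have hmin2 := minimizer J L r hb (d b) hkb (d a)
    simp only [euclNorm_eq]
    apply Real.sqrt_le_sqrt
    rcases hab.eq_or_lt with h | hlt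
    · rw [h]
    · have hg : (L *ᵥ d b) ⬝ᵥ (L *ᵥ d b) ≤ (L *ᵥ d a) ⬝ᵥ (L *ᵥ d a) := by
        nlinarith [hmin1, hmin2, hlt]
      nlinarith [hmin1, mul_nonneg ha.le (sub_nonneg.2 hg)]
  · -- Part (iii)
    intro hgt ⟨lam, hlam, heq⟩
    have := part1 lam hlam
    rw [heq] at this
    linarith
end

section
/- (Gain estimate, first inequality) Let J ∈ ℝ^{m×n}, L ∈ ℝ^{p×n}, x, x* ∈ ℝⁿ, F, y^δ ∈ ℝ^m, λ > 0, θ > 1, q ∈ (0,1). Suppose d ∈ ℝⁿ satisfies (JᵀJ + λ LᵀL) d = −Jᵀ(F − y^δ), that ‖F − y^δ + J d‖ = q‖F − y^δ‖, and that ‖F − y^δ + J(x* − x)‖ ≤ (q/θ)‖F − y^δ‖. Set x⁺ := x + d. Then ‖x − x*‖_L² − ‖x⁺ − x*‖_L² ≥ ‖x⁺ − x‖_L². -/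
open Matrix

lemma euclNorm_nonneg {k : ℕ} (v : Fin k → ℝ) : 0 ≤ euclNorm v := norm_nonneg _

lemma euclNorm_sq_eq {k : ℕ} (v : Fin k → ℝ) : euclNorm v ^ 2 = v ⬝ᵥ v := by
  have : euclNorm v = Real.sqrt (∑ i, v i ^ 2) := by
    simp [euclNorm, EuclideanSpace.norm_eq, Real.norm_eq_abs, sq_abs]
  rw [this, Real.sq_sqrt (by positivity)]
  simp [dotProduct, sq]

lemma dot_le_euclNorm {k : ℕ} (a b : Fin k → ℝ) :
    a ⬝ᵥ b ≤ euclNorm a * euclNorm b := by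
  have h := real_inner_le_norm ((EuclideanSpace.equiv (Fin k) ℝ).symm a)
    ((EuclideanSpace.equiv (Fin k) ℝ).symm b)
  simpa [euclNorm, PiLp.inner_apply, RCLike.inner_apply, dotProduct, mul_comm] using h

/-- Gain estimate, first inequality: if `(JᵀJ + λLᵀL)d = −Jᵀ(F − yδ)`,
`‖F − yδ + Jd‖ = q‖F − yδ‖` and `‖F − yδ + J(x* − x)‖ ≤ (q/θ)‖F − yδ‖`, then with
`x⁺ = x + d` one has `‖x − x*‖_L² − ‖x⁺ − x*‖_L² ≥ ‖x⁺ − x‖_L²`. -/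
theorem gain_estimate_first (m n p : ℕ)
    (J : Matrix (Fin m) (Fin n) ℝ) (L : Matrix (Fin p) (Fin n) ℝ)
    (x xstar : Fin n → ℝ) (F yδ : Fin m → ℝ)
    (lam θ q : ℝ) (hlam : 0 < lam) (hθ : 1 < θ) (hq0 : 0 < q) (hq1 : q < 1)
    (d : Fin n → ℝ)
    (hd : (Jᵀ * J + lam • (Lᵀ * L)).mulVec d = -(Jᵀ.mulVec (F - yδ)))
    (hqc : euclNorm (F - yδ + J.mulVec d) = q * euclNorm (F - yδ))
    (hnear : euclNorm (F - yδ + J.mulVec (xstar - x)) ≤ (q / θ) * euclNorm (F - yδ)) :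
    euclNorm (L.mulVec (x - xstar)) ^ 2 - euclNorm (L.mulVec (x + d - xstar)) ^ 2 ≥
      euclNorm (L.mulVec (x + d - x)) ^ 2 := by
  set r : Fin m → ℝ := F - yδ with hr
  set rp : Fin m → ℝ := r + J.mulVec d with hrp
  set rs : Fin m → ℝ := r + J.mulVec (xstar - x) with hrs
  set e : Fin n → ℝ := x - xstar with he
  -- step 1 : lam • (LᵀL) d = - Jᵀ rp
  have h1 : lam • (Lᵀ * L).mulVec d = -(Jᵀ.mulVec rp) := by
    have := hd
    rw [Matrix.add_mulVec, Matrix.smul_mulVec] at this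
    have h2 : Jᵀ.mulVec rp = Jᵀ.mulVec r + (Jᵀ * J).mulVec d := by
      rw [hrp, Matrix.mulVec_add, Matrix.mulVec_mulVec]
    rw [h2]
    have := congrArg (fun v => v - (Jᵀ * J).mulVec d) this
    simpa [sub_eq_iff_eq_add, neg_add, add_comm, sub_eq_add_neg] using this
  -- key inequality : (L d) ⬝ (L (d + e)) ≤ 0
  have hJde : J.mulVec (d + e) = rp - rs := by
    rw [Matrix.mulVec_add, hrp, hrs, he]
    have : J.mulVec (xstar - x) = -(J.mulVec (x - xstar)) := by
      rw [← Matrix.mulVec_neg]; congr 1; abel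
    rw [this]; abel
  have hLL : ∀ w : Fin n → ℝ, (L.mulVec d) ⬝ᵥ (L.mulVec w) = ((Lᵀ * L).mulVec d) ⬝ᵥ w := by
    intro w
    rw [← Matrix.mulVec_mulVec, Matrix.dotProduct_mulVec, Matrix.mulVec_transpose]
  have hJT : ∀ (v : Fin m → ℝ) (w : Fin n → ℝ), (Jᵀ.mulVec v) ⬝ᵥ w = v ⬝ᵥ (J.mulVec w) := by
    intro v w
    rw [Matrix.mulVec_transpose, ← Matrix.dotProduct_mulVec]
  have hkey : lam * ((L.mulVec d) ⬝ᵥ (L.mulVec (d + e))) = -(rp ⬝ᵥ (rp - rs)) := by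
    have haux : (lam • (Lᵀ * L).mulVec d) ⬝ᵥ (d + e) = -(rp ⬝ᵥ (rp - rs)) := by
      rw [h1, neg_dotProduct, hJT, hJde]
    rw [hLL (d + e)]
    rw [smul_dotProduct, smul_eq_mul] at haux
    exact haux
  -- rp ⬝ (rp - rs) ≥ 0
  have hrpnorm : euclNorm rp = q * euclNorm r := hqc
  have hrsnorm : euclNorm rs ≤ (q / θ) * euclNorm r := hnear
  have hcs : rp ⬝ᵥ rs ≤ euclNorm rp * euclNorm rs := dot_le_euclNorm rp rs
  have hpos : 0 ≤ rp ⬝ᵥ (rp - rs) := by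
    have h3 : rp ⬝ᵥ (rp - rs) = rp ⬝ᵥ rp - rp ⬝ᵥ rs := by
      rw [dotProduct_sub]
    have h4 : rp ⬝ᵥ rp = (q * euclNorm r) ^ 2 := by
      rw [← euclNorm_sq_eq, hrpnorm]
    have hrn : 0 ≤ euclNorm r := euclNorm_nonneg r
    have h5 : euclNorm rp * euclNorm rs ≤ (q * euclNorm r) * ((q / θ) * euclNorm r) := by
      apply mul_le_mul (le_of_eq hrpnorm) hrsnorm (euclNorm_nonneg rs) (by positivity)
    have hθ0 : 0 < θ := lt_trans one_pos hθ
    have h6 : (q * euclNorm r) * ((q / θ) * euclNorm r) ≤ (q * euclNorm r) ^ 2 := by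
      have hqθ : (q / θ) ≤ q := by
        rw [div_le_iff₀ hθ0]; nlinarith
      have h7 : (q / θ) * euclNorm r ≤ q * euclNorm r :=
        mul_le_mul_of_nonneg_right hqθ hrn
      calc (q * euclNorm r) * ((q / θ) * euclNorm r)
          ≤ (q * euclNorm r) * (q * euclNorm r) :=
            mul_le_mul_of_nonneg_left h7 (by positivity)
        _ = (q * euclNorm r) ^ 2 := (sq _).symm
    nlinarith
  have hkey2 : (L.mulVec d) ⬝ᵥ (L.mulVec (d + e)) ≤ 0 := by
    nlinarith
  -- conclude
  have hxd : x + d - x = d := by abel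
  have hxds : L.mulVec (x + d - xstar) = L.mulVec e + L.mulVec d := by
    rw [← Matrix.mulVec_add]; congr 1; rw [he]; abel
  rw [hxd, hxds, ge_iff_le, ← sub_nonneg]
  rw [euclNorm_sq_eq, euclNorm_sq_eq, euclNorm_sq_eq]
  have hexp : (L.mulVec e + L.mulVec d) ⬝ᵥ (L.mulVec e + L.mulVec d)
      = L.mulVec e ⬝ᵥ L.mulVec e + 2 * (L.mulVec d ⬝ᵥ L.mulVec e) + L.mulVec d ⬝ᵥ L.mulVec d := by
    rw [dotProduct_add, add_dotProduct, add_dotProduct,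
      dotProduct_comm (L.mulVec e) (L.mulVec d)]
    ring
  have hsplit : (L.mulVec d) ⬝ᵥ (L.mulVec (d + e))
      = L.mulVec d ⬝ᵥ L.mulVec d + L.mulVec d ⬝ᵥ L.mulVec e := by
    rw [Matrix.mulVec_add, dotProduct_add]
  nlinarith
end

section
/- (One-step estimate with noisy data) Let F : ℝⁿ → ℝᵐ be continuously differentiable with Jacobian J(x), L ∈ ℝ^{p×n}, y, y^δ ∈ ℝᵐ with ‖y − y^δ‖ ≤ δ, c > 0 and τ > 0. Let x* satisfy F(x*) = y and suppose the TCC-L inequality ‖J(x)(x*−x) − F(x*) + F(x)‖ ≤ c‖x*−x‖_L ‖F(x*)−F(x)‖ holds at the point x. If τδ < ‖F(x) − y^δ‖, then ‖F(x) − y^δ + J(x)(x* − x)‖ ≤ ((1 + c(1+τ)‖x − x*‖_L)/τ) · ‖F(x) − y^δ‖. -/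
open Matrix

lemma euclNorm_add_le {k : ℕ} (a b : Fin k → ℝ) :
    euclNorm (a + b) ≤ euclNorm a + euclNorm b := norm_add_le _ _

lemma euclNorm_neg {k : ℕ} (a : Fin k → ℝ) : euclNorm (-a) = euclNorm a := norm_neg _

/-- One-step estimate with noisy data: if `‖y − yδ‖ ≤ δ`, the TCC-L inequality holds at
`x` (against a solution `x*` of `F(x) = y`), and the discrepancy criterion is not yet
met, i.e. `τδ < ‖F(x) − yδ‖`, then
`‖F(x) − yδ + J(x)(x* − x)‖ ≤ ((1 + c(1+τ)‖x − x*‖_L)/τ)·‖F(x) − yδ‖`. -/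
theorem noisy_one_step_estimate (n m p : ℕ)
    (F : (Fin n → ℝ) → (Fin m → ℝ)) (J : (Fin n → ℝ) → Matrix (Fin m) (Fin n) ℝ)
    (hF : ContDiff ℝ 1 F)
    (hJ : ∀ x, HasFDerivAt F ((J x).mulVecLin.toContinuousLinearMap) x)
    (L : Matrix (Fin p) (Fin n) ℝ) (y yδ : Fin m → ℝ) (δ : ℝ)
    (hnoise : euclNorm (y - yδ) ≤ δ)
    (c τ : ℝ) (hc : 0 < c) (hτ : 0 < τ)
    (xstar : Fin n → ℝ) (hxstar : F xstar = y)
    (x : Fin n → ℝ)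
    (htcc : euclNorm ((J x).mulVec (xstar - x) - F xstar + F x) ≤
      c * euclNorm (L.mulVec (xstar - x)) * euclNorm (F xstar - F x))
    (hdisc : τ * δ < euclNorm (F x - yδ)) :
    euclNorm (F x - yδ + (J x).mulVec (xstar - x)) ≤
      ((1 + c * (1 + τ) * euclNorm (L.mulVec (x - xstar))) / τ) *
        euclNorm (F x - yδ) := by
  set r := euclNorm (F x - yδ) with hr
  have hδ0 : 0 ≤ δ := le_trans (euclNorm_nonneg _) hnoise
  have hr0 : 0 < r := lt_of_le_of_lt (by positivity) hdisc
  -- vector identity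
  have hid : F x - yδ + (J x).mulVec (xstar - x)
      = ((J x).mulVec (xstar - x) - F xstar + F x) + (y - yδ) := by
    rw [hxstar]; abel
  have h1 : euclNorm (F x - yδ + (J x).mulVec (xstar - x)) ≤
      c * euclNorm (L.mulVec (xstar - x)) * euclNorm (F xstar - F x) + δ := by
    rw [hid]
    calc euclNorm _ ≤ euclNorm ((J x).mulVec (xstar - x) - F xstar + F x)
          + euclNorm (y - yδ) := euclNorm_add_le _ _
      _ ≤ _ := add_le_add htcc hnoise
  have hLsym : euclNorm (L.mulVec (xstar - x)) = euclNorm (L.mulVec (x - xstar)) := by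
    rw [show L.mulVec (xstar - x) = -(L.mulVec (x - xstar)) by
      rw [← Matrix.mulVec_neg]; congr 1; abel, euclNorm_neg]
  have h2 : euclNorm (F xstar - F x) ≤ δ + r := by
    have : F xstar - F x = (y - yδ) + -(F x - yδ) := by rw [hxstar]; abel
    rw [this]
    calc euclNorm _ ≤ euclNorm (y - yδ) + euclNorm (-(F x - yδ)) := euclNorm_add_le _ _
      _ ≤ δ + r := by rw [euclNorm_neg]; exact add_le_add hnoise le_rfl
  have hδτ : δ * τ ≤ r := by nlinarith [hdisc]
  set a := c * euclNorm (L.mulVec (x - xstar)) with ha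
  have ha0 : 0 ≤ a := mul_nonneg hc.le (euclNorm_nonneg _)
  have hs0 : 0 ≤ euclNorm (F xstar - F x) := euclNorm_nonneg _
  have h3 : euclNorm (F x - yδ + (J x).mulVec (xstar - x)) ≤ a * (δ + r) + δ := by
    rw [hLsym] at h1
    calc euclNorm _ ≤ a * euclNorm (F xstar - F x) + δ := h1
      _ ≤ a * (δ + r) + δ := by nlinarith [h2]
  have : a * (δ + r) + δ ≤ ((1 + c * (1 + τ) * euclNorm (L.mulVec (x - xstar))) / τ) * r := by
    rw [div_mul_eq_mul_div, le_div_iff₀ hτ]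
    have haN : c * (1 + τ) * euclNorm (L.mulVec (x - xstar)) = a * (1 + τ) := by
      rw [ha]; ring
    rw [haN]
    nlinarith [mul_le_mul_of_nonneg_left hδτ ha0, ha0, hτ.le]
  linarith
end
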